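/- Let X be Polish, H ⊆ C_b(X) a linear subspace containing constants, μ0 a Borel probability measure, Q = {μ : ∫ h dμ = ∫ h dμ0 for all h ∈ H}, β a penalty function with conjugate β*, γ > 0, and θ a Borel probability measure. If π ∈ Q satisfies π ≪ θ and ∫ β*(dπ/dθ) dθ < ∞, then for every f ∈ C_b(X) one has φ_{θ,γ}(f) = inf_{h∈H}{∫ h dμ0 + ∫ β_γ(f−h) dθ} ≥ ∫ f dπ − (1/γ) ∫ β*(dπ/dθ) dθ > −∞; in particular φ_{θ,γ} is real-valued on C_b(X). -/

import Mathlib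

open MeasureTheory BoundedContinuousFunction Filter Topology

/-- Convex conjugate `β*(y) = sup_{x ∈ ℝ} (x*y - β x)`. -/
noncomputable def betaConj (β : ℝ → ℝ) (y : ℝ) : ℝ :=
  sSup {z : ℝ | ∃ x : ℝ, z = x * y - β x}

/-- The regularized (penalized) superhedging functional
`φ_{θ,γ}(f) = inf_{h ∈ H} { ∫ h dμ0 + ∫ β_γ(f - h) dθ }` with `β_γ(x) = β(γ x)/γ`. -/
noncomputable def phiReg {X : Type*} [TopologicalSpace X] [MeasurableSpace X]
    (μ0 θ : Measure X) (H : Set (X →ᵇ ℝ)) (β : ℝ → ℝ) (γ : ℝ) (f : X →ᵇ ℝ) : ℝ :=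
  sInf {r : ℝ | ∃ h ∈ H, r = (∫ x, h x ∂μ0) + ∫ x, β (γ * (f x - h x)) / γ ∂θ}

/-- `μ ∈ Q` iff `μ` is a Borel probability measure with `∫ h dμ = ∫ h dμ0` for all `h ∈ H`. -/
def memQ {X : Type*} [TopologicalSpace X] [MeasurableSpace X]
    (μ0 : Measure X) (H : Set (X →ᵇ ℝ)) (μ : Measure X) : Prop :=
  IsProbabilityMeasure μ ∧ ∀ h ∈ H, ∫ x, h x ∂μ = ∫ x, h x ∂μ0

lemma bddAbove_conjSet (β : ℝ → ℝ) (hβ0 : ∀ x, 0 ≤ β x)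
    (hβsl : Tendsto (fun x => β x / x) atTop atTop) {y : ℝ} (hy : 0 ≤ y) :
    BddAbove {z : ℝ | ∃ x : ℝ, z = x * y - β x} := by
  obtain ⟨M, hM⟩ := eventually_atTop.mp (hβsl.eventually_ge_atTop (y + 1))
  refine ⟨max 1 M * y, ?_⟩
  rintro z ⟨x, rfl⟩
  have hMy : 0 ≤ max 1 M * y := mul_nonneg (le_trans zero_le_one (le_max_left 1 M)) hy
  rcases le_or_gt x 0 with hx | hx
  · have : x * y ≤ 0 := mul_nonpos_of_nonpos_of_nonneg hx hy
    nlinarith [hβ0 x]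
  · rcases le_or_gt x (max 1 M) with hxM | hxM
    · nlinarith [hβ0 x]
    · have hxM' : M ≤ x := le_of_lt (lt_of_le_of_lt (le_max_right 1 M) hxM)
      have h1 : y + 1 ≤ β x / x := hM x hxM'
      have h2 : (y + 1) * x ≤ β x := (le_div_iff₀ hx).mp h1
      nlinarith


/-- If `π ∈ Q` satisfies `π ≪ θ` and `∫ β*(dπ/dθ) dθ < ∞`, then for every
`f ∈ C_b(X)` the penalized value of every `h ∈ H` is bounded below by
`∫ f dπ - (1/γ) ∫ β*(dπ/dθ) dθ`, and hence so is `φ_{θ,γ}(f)`;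
in particular `φ_{θ,γ}` is real-valued on `C_b(X)`. -/
theorem statement6 {X : Type*} [TopologicalSpace X] [PolishSpace X]
    [MeasurableSpace X] [BorelSpace X]
    (μ0 θ : Measure X) [IsProbabilityMeasure μ0] [IsProbabilityMeasure θ]
    (H : Submodule ℝ (X →ᵇ ℝ))
    (hconst : ∀ c : ℝ, BoundedContinuousFunction.const X c ∈ H)
    (β : ℝ → ℝ) (hβ0 : ∀ x, 0 ≤ β x) (hβdiff : Differentiable ℝ β)
    (hβmono : Monotone β) (hβconv : ConvexOn ℝ Set.univ β)
    (hβsl : Tendsto (fun x => β x / x) atTop atTop)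
    (γ : ℝ) (hγ : 0 < γ)
    (π : Measure X) (hπQ : memQ μ0 (H : Set (X →ᵇ ℝ)) π) (hπac : π ≪ θ)
    (hπint : Integrable (fun x => betaConj β ((π.rnDeriv θ x).toReal)) θ)
    (f : X →ᵇ ℝ) :
    (∀ h ∈ H,
      (∫ x, f x ∂π) - (1 / γ) * ∫ x, betaConj β ((π.rnDeriv θ x).toReal) ∂θ ≤
        (∫ x, h x ∂μ0) + ∫ x, β (γ * (f x - h x)) / γ ∂θ) ∧
    (∫ x, f x ∂π) - (1 / γ) * ∫ x, betaConj β ((π.rnDeriv θ x).toReal) ∂θ ≤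
      phiReg μ0 θ (H : Set (X →ᵇ ℝ)) β γ f := by
  have hπ : IsProbabilityMeasure π := hπQ.1
  set D : X → ℝ := fun x => (π.rnDeriv θ x).toReal with hDdef
  have hDnn : ∀ x, 0 ≤ D x := fun x => ENNReal.toReal_nonneg
  have hkey : ∀ (a : ℝ) (x : X), a * D x - β a ≤ betaConj β (D x) := fun a x =>
    le_csSup (bddAbove_conjSet β hβ0 hβsl (hDnn x)) ⟨a, rfl⟩
  have main : ∀ h ∈ H,
      (∫ x, f x ∂π) - (1 / γ) * ∫ x, betaConj β (D x) ∂θ ≤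
        (∫ x, h x ∂μ0) + ∫ x, β (γ * (f x - h x)) / γ ∂θ := by
    intro h hh
    set g : X →ᵇ ℝ := f - h with hgdef
    have hgx : ∀ x, g x = f x - h x := fun x => rfl
    have hgbd : ∀ x, |g x| ≤ ‖g‖ := by
      intro x
      simpa [Real.norm_eq_abs] using g.norm_coe_le_norm x
    have hDint : Integrable D θ := Measure.integrable_toReal_rnDeriv
    have hgDint : Integrable (fun x => (γ * g x) * D x) θ := by
      apply hDint.bdd_mul (c := γ * ‖g‖)
      · exact (continuous_const.mul g.continuous).aestronglyMeasurable
      · exact Filter.Eventually.of_forall fun x => by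
          rw [Real.norm_eq_abs, abs_mul, abs_of_pos hγ]
          exact mul_le_mul_of_nonneg_left (hgbd x) hγ.le
    have hβgint : Integrable (fun x => β (γ * g x)) θ := by
      apply Integrable.mono' (integrable_const (β (γ * ‖g‖)))
      · exact (hβdiff.continuous.comp (continuous_const.mul g.continuous)).aestronglyMeasurable
      · filter_upwards with x
        rw [Real.norm_eq_abs, abs_of_nonneg (hβ0 _)]
        apply hβmono
        apply mul_le_mul_of_nonneg_left _ hγ.le
        exact le_trans (le_abs_self _) (hgbd x)
    have hineq : ∫ x, (γ * g x) * D x ∂θ ≤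
        (∫ x, β (γ * g x) ∂θ) + ∫ x, betaConj β (D x) ∂θ := by
      rw [← integral_add hβgint hπint]
      refine integral_mono hgDint (hβgint.add hπint) fun x => ?_
      have := hkey (γ * g x) x
      linarith
    have hsmul : ∫ x, (γ * g x) * D x ∂θ = γ * ∫ x, g x ∂π := by
      rw [← MeasureTheory.integral_rnDeriv_smul hπac (f := fun x => g x), ← integral_const_mul]
      congr 1
      ext x
      simp [smul_eq_mul]
      ring
    have hgπ : ∫ x, g x ∂π = (∫ x, f x ∂π) - ∫ x, h x ∂μ0 := by
      have : ∫ x, g x ∂π = (∫ x, f x ∂π) - ∫ x, h x ∂π := by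
        simp only [hgx]
        exact integral_sub (f.integrable π) (h.integrable π)
      rw [this, hπQ.2 h hh]
    have hdiv : ∫ x, β (γ * (f x - h x)) / γ ∂θ = (∫ x, β (γ * g x) ∂θ) / γ := by
      rw [integral_div]
      congr 1
    rw [hdiv]
    rw [hsmul, hgπ] at hineq
    rw [← mul_le_mul_iff_right₀ hγ]
    field_simp
    nlinarith [hineq]
  refine ⟨main, ?_⟩
  apply le_csInf
  · exact ⟨(∫ x, (0:X →ᵇ ℝ) x ∂μ0) + ∫ x, β (γ * (f x - (0:X →ᵇ ℝ) x)) / γ ∂θ,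
      ⟨0, H.zero_mem, rfl⟩⟩
  · rintro r ⟨h, hh, rfl⟩
    exact main h hh
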